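/- Let f: K → ℝ be a C^1 symmetric function on an open symmetric cone K ⊆ ℝ^n that is concave on K. Then for all κ ∈ K and all indices i ≠ j with κ_i ≠ κ_j, one has (f_i(κ) - f_j(κ))/(κ_i - κ_j) ≤ 0, where f_i denotes the partial derivative of f in the i-th variable. -/

import Mathlib

open Finset

/-- The normalized k-th elementary symmetric polynomial `H_k`. -/
noncomputable def nH (n k : ℕ) (κ : Fin n → ℝ) : ℝ :=
  (n.choose k : ℝ)⁻¹ * ∑ s ∈ Finset.univ.powersetCard k, ∏ i ∈ s, κ i

/-- Partial derivative of `f` in the `i`-th variable at `κ`. -/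
noncomputable def pd {n : ℕ} (f : (Fin n → ℝ) → ℝ) (i : Fin n) (κ : Fin n → ℝ) : ℝ :=
  deriv (fun t => f (Function.update κ i t)) (κ i)

/-- The k-th Garding cone `K_k`. -/
def GC (n k : ℕ) : Set (Fin n → ℝ) :=
  {κ | ∀ j : ℕ, 1 ≤ j → j ≤ k → 0 < nH n j κ}

lemma pd_eq {n : ℕ} {f : (Fin n → ℝ) → ℝ} {κ : Fin n → ℝ} (i : Fin n)
    (hd : DifferentiableAt ℝ f κ) :
    pd f i κ = fderiv ℝ f κ ((Pi.single i 1 : Fin n → ℝ)) := by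
  have hupd : ∀ t : ℝ, Function.update κ i t =
      κ + (t - κ i) • (Pi.single i 1 : Fin n → ℝ) := by
    intro t; funext x
    by_cases hx : x = i
    · subst hx; simp
    · simp [Function.update_of_ne hx, Pi.single_apply, hx]
  have h1 : HasDerivAt (fun t : ℝ => κ + (t - κ i) • (Pi.single i 1 : Fin n → ℝ))
      ((Pi.single i 1 : Fin n → ℝ)) (κ i) := by
    have := (((hasDerivAt_id (κ i)).sub_const (κ i)).smul_const
      ((Pi.single i 1 : Fin n → ℝ))).const_add κ
    simpa using this
  have hval : κ + ((κ i) - κ i) • (Pi.single i 1 : Fin n → ℝ) = κ := by simp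
  have hF : HasFDerivAt f (fderiv ℝ f κ) (κ + ((κ i) - κ i) • (Pi.single i 1 : Fin n → ℝ)) := by
    rw [hval]; exact hd.hasFDerivAt
  have h2 := hF.comp_hasDerivAt (κ i) h1
  have h3 : HasDerivAt (fun t : ℝ => f (Function.update κ i t))
      (fderiv ℝ f κ ((Pi.single i 1 : Fin n → ℝ))) (κ i) := by
    simp only [hupd]; exact h2
  exact h3.deriv

theorem stmt6 (n : ℕ) (K : Set (Fin n → ℝ)) (f : (Fin n → ℝ) → ℝ)
    (hKopen : IsOpen K) (hKconv : Convex ℝ K)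
    (hKcone : ∀ t : ℝ, 0 < t → ∀ κ ∈ K, t • κ ∈ K)
    (hKsymm : ∀ σ : Equiv.Perm (Fin n), ∀ κ ∈ K, (κ ∘ σ) ∈ K)
    (hfsymm : ∀ σ : Equiv.Perm (Fin n), ∀ κ ∈ K, f (κ ∘ σ) = f κ)
    (hf : ContDiffOn ℝ 1 f K) (hconc : ConcaveOn ℝ K f) :
    ∀ κ ∈ K, ∀ i j : Fin n, i ≠ j → κ i ≠ κ j →
      (pd f i κ - pd f j κ) / (κ i - κ j) ≤ 0 := by
  intro κ hκ i j hij hκij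
  -- differentiability at κ
  have hd : DifferentiableAt ℝ f κ :=
    ((hf.contDiffAt (hKopen.mem_nhds hκ)).differentiableAt one_ne_zero)
  set L := fderiv ℝ f κ with hL
  -- swapped point
  set κ' : Fin n → ℝ := κ ∘ (Equiv.swap i j) with hκ'
  have hκ'K : κ' ∈ K := hKsymm (Equiv.swap i j) κ hκ
  have hfκ' : f κ' = f κ := hfsymm (Equiv.swap i j) κ hκ
  set v : Fin n → ℝ := κ' - κ with hv
  -- directional derivative nonneg
  have hderiv : HasDerivAt (fun t : ℝ => f (κ + t • v)) (L v) 0 := by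
    have hc : HasDerivAt (fun t : ℝ => κ + t • v) v 0 :=
      ((hasDerivAt_id (0:ℝ)).smul_const v).const_add κ |>.congr_deriv (by simp)
    have hF : HasFDerivAt f L (κ + (0:ℝ) • v) := by
      simpa using hd.hasFDerivAt
    exact hF.comp_hasDerivAt 0 hc
  have hslope : ∀ t : ℝ, t ∈ Set.Ioo (0:ℝ) 1 →
      0 ≤ (f (κ + t • v) - f κ) / t := by
    intro t ht
    have h1t : (0:ℝ) ≤ 1 - t := by linarith [ht.2]
    have hmem : (1 - t) • κ + t • κ' ∈ K := hKconv hκ hκ'K h1t ht.1.le (by ring)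
    have hcomb := hconc.2 hκ hκ'K h1t ht.1.le (by ring : (1 - t) + t = 1)
    have heq : (1 - t) • κ + t • κ' = κ + t • v := by
      funext x; simp [hv]; ring
    rw [heq] at hcomb
    have : f κ ≤ f (κ + t • v) := by
      have := hcomb
      simp only [smul_eq_mul, hfκ'] at this
      nlinarith [this]
    exact div_nonneg (by linarith) ht.1.le
  have hLv : 0 ≤ L v := by
    have htend := hasDerivAt_iff_tendsto_slope.1 hderiv
    have htend' : Filter.Tendsto (slope (fun t : ℝ => f (κ + t • v)) 0)
        (nhdsWithin 0 (Set.Ioi 0)) (nhds (L v)) :=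
      htend.mono_left (nhdsWithin_mono 0 (fun x hx => ne_of_gt hx))
    refine ge_of_tendsto htend' ?_
    filter_upwards [Ioo_mem_nhdsGT_of_mem (by norm_num : (0:ℝ) ∈ Set.Ico (0:ℝ) 1)] with t ht
    have := hslope t ht
    simpa [slope_def_field, div_eq_inv_mul] using this
  -- compute L v
  have hvdecomp : v = (κ j - κ i) • (Pi.single i 1 : Fin n → ℝ) + (κ i - κ j) • (Pi.single j 1 : Fin n → ℝ) := by
    funext x
    by_cases hxi : x = i
    · subst hxi; simp [hv, hκ', Equiv.swap_apply_left, Pi.single_apply, hij, Ne.symm hij]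
    · by_cases hxj : x = j
      · subst hxj; simp [hv, hκ', Equiv.swap_apply_right, Pi.single_apply, hij, Ne.symm hij]
      · simp [hv, hκ', Equiv.swap_apply_of_ne_of_ne hxi hxj, Pi.single_apply, hxi, hxj]
  have hLvcalc : L v = (κ j - κ i) * (pd f i κ - pd f j κ) := by
    rw [hvdecomp, map_add, map_smul, map_smul, pd_eq i hd, pd_eq j hd]
    simp [smul_eq_mul]; ring
  rw [hLvcalc] at hLv
  rcases hκij.lt_or_gt with h | h
  · apply div_nonpos_of_nonneg_of_nonpos
    · nlinarith
    · linarith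
  · apply div_nonpos_of_nonpos_of_nonneg
    · nlinarith
    · linarith
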